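/- Let n be a positive integer and let P be a subset of [[n]] = {(i,j) : 1 ≤ i < j ≤ n} that is a poset (i.e., (i,j),(j,k) ∈ P implies (i,k) ∈ P). Then the pattern group U_P = {g ∈ U_n : g_{ij} = 0 whenever i < j and (i,j) ∉ P} is a normal subgroup of U_n if and only if P satisfies: for all 1 ≤ i ≤ j < k ≤ l ≤ n, (i,l) ∉ P implies (j,k) ∉ P. -/

import Mathlib

open scoped Classical

abbrev Mat (n : ℕ) (F : Type*) := Matrix (Fin n) (Fin n) F

/-- The set of positions strictly above the diagonal. -/
def PosUpper (n : ℕ) : Set (Fin n × Fin n) := {p | p.1 < p.2}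

/-- A poset on `[n]`: a set of strictly-upper positions closed under composition. -/
def IsPoset {n : ℕ} (P : Set (Fin n × Fin n)) : Prop :=
  P ⊆ PosUpper n ∧ ∀ i j k : Fin n, (i, j) ∈ P → (j, k) ∈ P → (i, k) ∈ P

/-- The normality condition for a pattern poset. -/
def NormalPoset {n : ℕ} (P : Set (Fin n × Fin n)) : Prop :=
  ∀ i j k l : Fin n, i ≤ j → j < k → k ≤ l → (i, l) ∉ P → (j, k) ∉ P

/-- The pattern group `U_P` (as a set of matrices). -/
def UPg {n : ℕ} {F : Type*} [Field F] (P : Set (Fin n × Fin n)) : Set (Mat n F) :=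
  {g | (∀ i, g i i = 1) ∧ ∀ i j : Fin n, i ≠ j → (i, j) ∉ P → g i j = 0}

/-- The algebra `n_P` of strictly upper triangular matrices supported on `P`. -/
def nPa {n : ℕ} {F : Type*} [Field F] (P : Set (Fin n × Fin n)) : Set (Mat n F) :=
  {X | ∀ i j : Fin n, (i, j) ∉ P → X i j = 0}

/-- The support of a matrix. -/
def msupp {n : ℕ} {F : Type*} [Field F] (X : Mat n F) : Set (Fin n × Fin n) :=
  {p | X p.1 p.2 ≠ 0}

/-- `F_q`-labeled set partitions: matrices in `n_P` with at most one nonzero entry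
in each row and each column. -/
def SPa {n : ℕ} {F : Type*} [Field F] (P : Set (Fin n × Fin n)) : Set (Mat n F) :=
  {X | X ∈ nPa P ∧ (∀ i j j' : Fin n, X i j ≠ 0 → X i j' ≠ 0 → j = j') ∧
       (∀ i i' j : Fin n, X i j ≠ 0 → X i' j ≠ 0 → i = i')}

section Aux
variable {n : ℕ} {F : Type*} [Field F]

/-- strictly upper triangular -/
def SU (X : Mat n F) : Prop := ∀ i j : Fin n, ¬ i < j → X i j = 0

lemma SU.mul {X Y : Mat n F} (hX : SU X) (hY : SU Y) : SU (X * Y) := by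
  intro i j hij
  rw [Matrix.mul_apply]
  refine Finset.sum_eq_zero fun m _ => ?_
  by_cases h : i < m
  · rw [hY m j (not_lt.mpr ((le_of_not_gt hij).trans h.le)), mul_zero]
  · rw [hX i m h, zero_mul]

lemma SU.neg {X : Mat n F} (hX : SU X) : SU (-X) := by
  intro i j hij; simp [hX i j hij]

lemma SU.pow_apply {X : Mat n F} (hX : SU X) :
    ∀ (k : ℕ) (i j : Fin n), (j : ℕ) < (i : ℕ) + k → (X ^ k) i j = 0 := by
  intro k
  induction k with
  | zero =>
    intro i j h
    simp only [pow_zero]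
    exact Matrix.one_apply_ne (fun e => by subst e; omega)
  | succ k ih =>
    intro i j h
    rw [pow_succ, Matrix.mul_apply]
    refine Finset.sum_eq_zero fun m _ => ?_
    by_cases hmj : m < j
    · have hm : (m : ℕ) < (j : ℕ) := hmj
      rw [ih i m (by omega), zero_mul]
    · rw [hX m j hmj, mul_zero]

lemma SU.pow_n {X : Mat n F} (hX : SU X) : X ^ n = 0 := by
  ext i j
  rw [Matrix.zero_apply]
  exact hX.pow_apply n i j (by have := j.isLt; omega)

lemma SU.pow_succ' {X : Mat n F} (hX : SU X) (k : ℕ) : SU (X ^ (k + 1)) := by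
  induction k with
  | zero => simpa using hX
  | succ k ih => rw [pow_succ]; exact ih.mul hX

lemma geom_inv {g : Mat n F} (hg : SU (1 - g)) :
    g⁻¹ = ∑ k ∈ Finset.range (n + 1), (1 - g) ^ k := by
  set A := 1 - g with hA
  have hpow : A ^ (n + 1) = 0 := by rw [pow_succ, hg.pow_n, zero_mul]
  have h1 : (∑ k ∈ Finset.range (n + 1), A ^ k) * g = 1 := by
    have := geom_sum_mul A (n + 1)
    rw [hpow] at this
    have h2 : A - 1 = -g := by rw [hA]; abel
    rw [h2, mul_neg, zero_sub] at this
    exact neg_injective this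
  exact Matrix.inv_eq_left_inv h1

lemma geom_su {g : Mat n F} (hg : SU (1 - g)) :
    SU ((∑ k ∈ Finset.range (n + 1), (1 - g) ^ k) - 1) := by
  set A := 1 - g with hA
  have : (∑ k ∈ Finset.range (n + 1), A ^ k) - 1
      = ∑ k ∈ Finset.range n, A ^ (k + 1) := by
    rw [Finset.sum_range_succ' (fun k => A ^ k) n]
    simp
  rw [this]
  intro i j hij
  rw [Matrix.sum_apply]
  exact Finset.sum_eq_zero fun k _ => hg.pow_succ' k i j hij

lemma su_of_mem {g : Mat n F} (hg : g ∈ UPg (F := F) (PosUpper n)) : SU (g - 1) := by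
  intro i j hij
  rcases eq_or_ne i j with rfl | hne
  · simp [Matrix.sub_apply, hg.1 i]
  · have h0 : g i j = 0 := hg.2 i j hne (by simpa [PosUpper] using hij)
    simp [Matrix.sub_apply, h0, Matrix.one_apply_ne hne]

lemma nP_left {P : Set (Fin n × Fin n)} (hP : IsPoset P) (hN : NormalPoset P)
    {A X : Mat n F} (hA : SU A) (hX : X ∈ nPa P) : A * X ∈ nPa P := by
  intro i l hil
  rw [Matrix.mul_apply]
  refine Finset.sum_eq_zero fun m _ => ?_
  by_cases h : i < m
  · by_cases hm : (m, l) ∈ P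
    · exact absurd hm (hN i m l l h.le (hP.1 hm) le_rfl hil)
    · rw [hX m l hm, mul_zero]
  · rw [hA i m h, zero_mul]

lemma nP_right {P : Set (Fin n × Fin n)} (hP : IsPoset P) (hN : NormalPoset P)
    {A X : Mat n F} (hX : X ∈ nPa P) (hA : SU A) : X * A ∈ nPa P := by
  intro i l hil
  rw [Matrix.mul_apply]
  refine Finset.sum_eq_zero fun m _ => ?_
  by_cases h : m < l
  · by_cases hm : (i, m) ∈ P
    · exact absurd hm (hN i i m l le_rfl (hP.1 hm) h.le hil)
    · rw [hX i m hm, zero_mul]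
  · rw [hA m l h, mul_zero]

lemma nP_add {P : Set (Fin n × Fin n)} {X Y : Mat n F}
    (hX : X ∈ nPa P) (hY : Y ∈ nPa P) : X + Y ∈ nPa P := by
  intro i j h
  rw [Matrix.add_apply, hX i j h, hY i j h, add_zero]
end Aux

section Steps
variable {n : ℕ} {F : Type*} [Field F] {P : Set (Fin n × Fin n)}

lemma mem_upper_one_add {a b : Fin n} (hab : a < b) :
    (1 + Matrix.single a b (1 : F)) ∈ UPg (F := F) (PosUpper n) := by
  constructor
  · intro c
    rw [Matrix.add_apply, Matrix.one_apply_eq,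
      Matrix.single_apply_of_ne _ _ _ _ _ (by rintro ⟨rfl, rfl⟩; exact absurd hab (lt_irrefl _)),
      add_zero]
  · intro c d hcd hne
    rw [Matrix.add_apply, Matrix.one_apply_ne hcd, zero_add]
    exact Matrix.single_apply_of_ne _ _ _ _ _ (by rintro ⟨rfl, rfl⟩; exact hne hab)

lemma mem_UPg_one_add {a b : Fin n} (hab : (a, b) ∈ P) (h' : a ≠ b) :
    (1 + Matrix.single a b (1 : F)) ∈ UPg (F := F) P := by
  constructor
  · intro c
    rw [Matrix.add_apply, Matrix.one_apply_eq,
      Matrix.single_apply_of_ne _ _ _ _ _ (by rintro ⟨rfl, rfl⟩; exact h' rfl),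
      add_zero]
  · intro c d hcd hne
    rw [Matrix.add_apply, Matrix.one_apply_ne hcd, zero_add]
    exact Matrix.single_apply_of_ne _ _ _ _ _ (by rintro ⟨rfl, rfl⟩; exact hne hab)

lemma inv_one_add {a b : Fin n} (hab : a ≠ b) :
    (1 + Matrix.single a b (1 : F))⁻¹ = 1 - Matrix.single a b (1 : F) := by
  apply Matrix.inv_eq_right_inv
  have h : (1 + Matrix.single a b (1 : F)) * (1 - Matrix.single a b (1 : F))
      = 1 - Matrix.single a b (1 : F) * Matrix.single a b (1 : F) := by
    noncomm_ring
  have h2 : Matrix.single a b (1 : F) * Matrix.single a b (1 : F) = 0 :=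
    Matrix.single_mul_single_of_ne _ _ _ _ hab.symm _
  rw [h, h2, sub_zero]

lemma stepA
    (hc : ∀ g ∈ UPg (F := F) (PosUpper n), ∀ u ∈ UPg (F := F) P, g * u * g⁻¹ ∈ UPg P)
    (hP : IsPoset P) {i j k : Fin n} (hij : i < j) (hjkP : (j, k) ∈ P) : (i, k) ∈ P := by
  have hjk : j < k := hP.1 hjkP
  have hik : i < k := hij.trans hjk
  set e1 := Matrix.single i j (1 : F) with he1
  set e2 := Matrix.single j k (1 : F) with he2
  set e3 := Matrix.single i k (1 : F) with he3
  have h12 : e1 * e2 = e3 := by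
    rw [he1, he2, he3, Matrix.single_mul_single_same, one_mul]
  have h11 : e1 * e1 = 0 := Matrix.single_mul_single_of_ne _ _ _ _ (ne_of_lt hij).symm _
  have h21 : e2 * e1 = 0 := Matrix.single_mul_single_of_ne _ _ _ _ (ne_of_gt hik) _
  have h31 : e3 * e1 = 0 := Matrix.single_mul_single_of_ne _ _ _ _ (ne_of_gt hik) _
  have hM := hc _ (mem_upper_one_add (F := F) hij) _ (mem_UPg_one_add hjkP (ne_of_lt hjk))
  rw [inv_one_add (ne_of_lt hij)] at hM
  have hexp : (1 + e1) * (1 + e2) * (1 - e1) = 1 + e2 + e3 := by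
    have h : (1 + e1) * (1 + e2) * (1 - e1)
        = 1 + e2 + e1 * e2 - e1 * e1 - e2 * e1 - e1 * e2 * e1 := by noncomm_ring
    rw [h, h12, h11, h21, h31]
    abel
  rw [hexp] at hM
  by_contra hnot
  have h0 := hM.2 i k (ne_of_lt hik) hnot
  have hv2 : e2 i k = 0 := by
    rw [he2]
    exact Matrix.single_apply_of_ne _ _ _ _ _
      (by rintro ⟨h1, h2⟩; exact absurd h1.symm (ne_of_lt hij))
  have hv3 : e3 i k = (1 : F) := by rw [he3]; exact Matrix.single_apply_same _ _ _
  rw [Matrix.add_apply, Matrix.add_apply, Matrix.one_apply_ne (ne_of_lt hik), hv2, hv3] at h0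
  simp at h0

lemma stepB
    (hc : ∀ g ∈ UPg (F := F) (PosUpper n), ∀ u ∈ UPg (F := F) P, g * u * g⁻¹ ∈ UPg P)
    (hP : IsPoset P) {i k l : Fin n} (hkl : k < l) (hikP : (i, k) ∈ P) : (i, l) ∈ P := by
  have hik : i < k := hP.1 hikP
  have hil : i < l := hik.trans hkl
  set e1 := Matrix.single k l (1 : F) with he1
  set e2 := Matrix.single i k (1 : F) with he2
  set e3 := Matrix.single i l (1 : F) with he3
  have h21 : e2 * e1 = e3 := by
    rw [he1, he2, he3, Matrix.single_mul_single_same, one_mul]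
  have h11 : e1 * e1 = 0 := Matrix.single_mul_single_of_ne _ _ _ _ (ne_of_lt hkl).symm _
  have h12 : e1 * e2 = 0 := Matrix.single_mul_single_of_ne _ _ _ _ (ne_of_gt hil) _
  have hM := hc _ (mem_upper_one_add (F := F) hkl) _ (mem_UPg_one_add hikP (ne_of_lt hik))
  rw [inv_one_add (ne_of_lt hkl)] at hM
  have hexp : (1 + e1) * (1 + e2) * (1 - e1) = 1 + e2 - e3 := by
    have h : (1 + e1) * (1 + e2) * (1 - e1)
        = 1 + e2 + e1 * e2 - e1 * e1 - e2 * e1 - e1 * e2 * e1 := by noncomm_ring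
    rw [h, h12, h11, h21, zero_mul]
    abel
  rw [hexp] at hM
  by_contra hnot
  have h0 := hM.2 i l (ne_of_lt hil) hnot
  have hv2 : e2 i l = 0 := by
    rw [he2]
    exact Matrix.single_apply_of_ne _ _ _ _ _
      (by rintro ⟨h1, h2⟩; exact absurd h2 (ne_of_lt hkl))
  have hv3 : e3 i l = (1 : F) := by rw [he3]; exact Matrix.single_apply_same _ _ _
  rw [Matrix.sub_apply, Matrix.add_apply, Matrix.one_apply_ne (ne_of_lt hil), hv2, hv3] at h0
  simp at h0

end Steps

lemma geom_mul_self {n : ℕ} {F : Type*} [Field F] {g : Mat n F} (hg : SU (1 - g)) :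
    g * (∑ k ∈ Finset.range (n + 1), (1 - g) ^ k) = 1 := by
  have hpow : (1 - g) ^ (n + 1) = 0 := by rw [pow_succ, hg.pow_n, zero_mul]
  have := mul_geom_sum (1 - g) (n + 1)
  rw [hpow] at this
  have h2 : (1 : Mat n F) - g - 1 = -g := by abel
  rw [h2, neg_mul, zero_sub] at this
  exact neg_injective this


/-- For a poset `P ⊆ [[n]]`, the pattern group `U_P` is a normal
subgroup of `U_n` iff `P` satisfies the normality condition. -/
theorem pattern_group_normal_iff {n : ℕ} {F : Type*} [Field F]
    (P : Set (Fin n × Fin n)) (hP : IsPoset P) :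
    (∀ g ∈ UPg (F := F) (PosUpper n), ∀ u ∈ UPg (F := F) P, g * u * g⁻¹ ∈ UPg P) ↔
      NormalPoset P := by
  constructor
  · intro hc i j k l hij hjk hkl hil hjkP
    apply hil
    have s1 : (i, k) ∈ P := by
      rcases eq_or_lt_of_le hij with rfl | h
      · exact hjkP
      · exact stepA hc hP h hjkP
    rcases eq_or_lt_of_le hkl with rfl | h
    · exact s1
    · exact stepB hc hP h s1
  · intro hN g hg u hu
    have hA : SU (g - 1) := su_of_mem hg
    have hA' : SU (1 - g) := by
      have := hA.neg; simpa using this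
    have hinv : g⁻¹ = ∑ k ∈ Finset.range (n + 1), (1 - g) ^ k := geom_inv hA'
    have hgh : g * (∑ k ∈ Finset.range (n + 1), (1 - g) ^ k) = 1 := geom_mul_self hA'
    set h := ∑ k ∈ Finset.range (n + 1), (1 - g) ^ k with hh
    have hC : SU (h - 1) := geom_su hA'
    have hBmem : (u - 1) ∈ nPa P := by
      intro a b hab
      rcases eq_or_ne a b with rfl | hne
      · simp [Matrix.sub_apply, hu.1 a]
      · simp [Matrix.sub_apply, hu.2 a b hne hab, Matrix.one_apply_ne hne]
    have hB1 : (u - 1) + (u - 1) * (h - 1) ∈ nPa P :=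
      nP_add hBmem (nP_right hP hN hBmem hC)
    have hD : (u - 1) + (u - 1) * (h - 1) + (g - 1) * ((u - 1) + (u - 1) * (h - 1)) ∈ nPa P :=
      nP_add hB1 (nP_left hP hN hA hB1)
    rw [hinv]
    have e1 : g * u * h = g * h + g * (u - 1) * h := by noncomm_ring
    have e2 : g * (u - 1) * h
        = (u - 1) + (u - 1) * (h - 1) + (g - 1) * ((u - 1) + (u - 1) * (h - 1)) := by
      noncomm_ring
    have e : g * u * h
        = 1 + ((u - 1) + (u - 1) * (h - 1) + (g - 1) * ((u - 1) + (u - 1) * (h - 1))) := by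
      rw [e1, hgh, e2]
    rw [e]
    constructor
    · intro a
      have hz : ((u - 1) + (u - 1) * (h - 1) + (g - 1) * ((u - 1) + (u - 1) * (h - 1))) a a = 0 :=
        hD a a (fun hmem => by
          have := hP.1 hmem
          simp only [PosUpper, Set.mem_setOf_eq] at this
          exact absurd this (lt_irrefl a))
      rw [Matrix.add_apply, Matrix.one_apply_eq, hz, add_zero]
    · intro a b hab hnab
      rw [Matrix.add_apply, Matrix.one_apply_ne hab, hD a b hnab, add_zero]
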